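/- The Ronkin function of a Laurent polynomial P is affine (linear plus constant) on each connected component of the complement of the amoeba of P. -/

import Mathlib

/-- Evaluation of a Laurent polynomial `P ∈ ℂ[z^{±1}, w^{±1}]` (given by its finitely
supported coefficient function on exponents) at `(z, w) ∈ (ℂ*)²`. -/
noncomputable def lEval (P : (ℤ × ℤ) →₀ ℂ) (z w : ℂ) : ℂ :=
  P.sum fun a c => c * z ^ a.1 * w ^ a.2

/-- The Ronkin function of `P`: the average of `log |P|` over the torus
`{|z| = e^x, |w| = e^y}`. -/
noncomputable def ronkin (P : (ℤ × ℤ) →₀ ℂ) (p : ℝ × ℝ) : ℝ :=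
  (2 * Real.pi)⁻¹ ^ 2 *
    ∫ θ in (0:ℝ)..(2 * Real.pi), ∫ φ in (0:ℝ)..(2 * Real.pi),
      Real.log ‖
        (lEval P (Complex.exp ((p.1 : ℂ) + θ * Complex.I))
                 (Complex.exp ((p.2 : ℂ) + φ * Complex.I)))‖

/-- The amoeba of `P`: the image of the zero locus of `P` in `(ℂ*)²` under
`(z, w) ↦ (log |z|, log |w|)`. -/
def amoeba (P : (ℤ × ℤ) →₀ ℂ) : Set (ℝ × ℝ) :=
  {p | ∃ z w : ℂ, z ≠ 0 ∧ w ≠ 0 ∧ lEval P z w = 0 ∧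
    ‖z‖ = Real.exp p.1 ∧ ‖w‖ = Real.exp p.2}

open Complex MeasureTheory Metric Set intervalIntegral

namespace RonkinProof

/-- exponential sum -/
noncomputable def E (s : Finset (ℤ × ℤ)) (c : (ℤ × ℤ) → ℂ) (u v : ℂ) : ℂ :=
  ∑ a ∈ s, c a * Complex.exp ((a.1 : ℂ) * u + (a.2 : ℂ) * v)

noncomputable def dd1 (c : (ℤ × ℤ) → ℂ) : (ℤ × ℤ) → ℂ := fun a => (a.1 : ℂ) * c a
noncomputable def dd2 (c : (ℤ × ℤ) → ℂ) : (ℤ × ℤ) → ℂ := fun a => (a.2 : ℂ) * c a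

variable {s : Finset (ℤ × ℤ)} {c c₀ : (ℤ × ℤ) → ℂ}

lemma E_continuous : Continuous fun z : ℂ × ℂ => E s c z.1 z.2 := by
  unfold E
  apply continuous_finset_sum
  intro a _
  exact continuous_const.mul ((((continuous_fst.const_smul ((a.1:ℂ))).add
    (continuous_snd.const_smul ((a.2:ℂ))))).cexp)

lemma E_hasDerivAt_u (v u : ℂ) :
    HasDerivAt (fun u => E s c u v) (E s (dd1 c) u v) u := by
  unfold E dd1
  apply HasDerivAt.fun_sum
  intro a _
  have h1 : HasDerivAt (fun u : ℂ => (a.1:ℂ) * u + (a.2:ℂ) * v) ((a.1:ℂ)) u := by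
    simpa using ((hasDerivAt_id u).const_mul (a.1:ℂ)).add_const ((a.2:ℂ) * v)
  have := (h1.cexp).const_mul (c a)
  refine this.congr_deriv ?_
  ring

lemma E_hasDerivAt_v (u v : ℂ) :
    HasDerivAt (fun v => E s c u v) (E s (dd2 c) u v) v := by
  unfold E dd2
  apply HasDerivAt.fun_sum
  intro a _
  have h1 : HasDerivAt (fun v : ℂ => (a.1:ℂ) * u + (a.2:ℂ) * v) ((a.2:ℂ)) v := by
    simpa using (((hasDerivAt_id v).const_mul (a.2:ℂ)).const_add ((a.1:ℂ) * u))
  have := (h1.cexp).const_mul (c a)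
  refine this.congr_deriv ?_
  ring

/-- real-direction derivatives -/
lemma E_hasDerivAt_x (t x : ℝ) (v : ℂ) :
    HasDerivAt (fun x : ℝ => E s c (↑x + ↑t * I) v) (E s (dd1 c) (↑x + ↑t * I) v) x := by
  have hin : HasDerivAt (fun ζ : ℂ => ζ + ↑t * I) 1 (x : ℂ) := by
    simpa using (hasDerivAt_id (x:ℂ)).add_const (↑t * I)
  have h := (E_hasDerivAt_u (s := s) (c := c) v ((x:ℂ) + ↑t * I)).comp (x:ℂ) hin
  simpa using h.comp_ofReal

lemma E_hasDerivAt_theta (x θ : ℝ) (v : ℂ) :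
    HasDerivAt (fun θ : ℝ => E s c (↑x + ↑θ * I) v) (E s (dd1 c) (↑x + ↑θ * I) v * I) θ := by
  have hin : HasDerivAt (fun ζ : ℂ => ↑x + ζ * I) I (θ : ℂ) := by
    simpa using ((hasDerivAt_id (θ:ℂ)).mul_const I).const_add (x:ℂ)
  have h := (E_hasDerivAt_u (s := s) (c := c) v ((x:ℂ) + ↑θ * I)).comp (θ:ℂ) hin
  simpa using h.comp_ofReal

lemma E_hasDerivAt_y (u : ℂ) (t y : ℝ) :
    HasDerivAt (fun y : ℝ => E s c u (↑y + ↑t * I)) (E s (dd2 c) u (↑y + ↑t * I)) y := by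
  have hin : HasDerivAt (fun ζ : ℂ => ζ + ↑t * I) 1 (y : ℂ) := by
    simpa using (hasDerivAt_id (y:ℂ)).add_const (↑t * I)
  have h := (E_hasDerivAt_v (s := s) (c := c) u ((y:ℂ) + ↑t * I)).comp (y:ℂ) hin
  simpa using h.comp_ofReal

lemma E_hasDerivAt_phi (u : ℂ) (y φ : ℝ) :
    HasDerivAt (fun φ : ℝ => E s c u (↑y + ↑φ * I)) (E s (dd2 c) u (↑y + ↑φ * I) * I) φ := by
  have hin : HasDerivAt (fun ζ : ℂ => ↑y + ζ * I) I (φ : ℂ) := by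
    simpa using ((hasDerivAt_id (φ:ℂ)).mul_const I).const_add (y:ℂ)
  have h := (E_hasDerivAt_v (s := s) (c := c) u ((y:ℂ) + ↑φ * I)).comp (φ:ℂ) hin
  simpa using h.comp_ofReal

/-- periodicity -/
lemma E_period_u (u v : ℂ) : E s c (u + 2 * ↑Real.pi * I) v = E s c u v := by
  unfold E
  refine Finset.sum_congr rfl fun a _ => ?_
  have h1 : (a.1:ℂ) * (u + 2 * ↑Real.pi * I) + (a.2:ℂ) * v
      = ((a.1:ℂ) * u + (a.2:ℂ) * v) + (a.1:ℂ) * (2 * ↑Real.pi * I) := by ring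
  rw [h1, Complex.exp_add, Complex.exp_int_mul_two_pi_mul_I, mul_one]

lemma E_period_v (u v : ℂ) : E s c u (v + 2 * ↑Real.pi * I) = E s c u v := by
  unfold E
  refine Finset.sum_congr rfl fun a _ => ?_
  have h1 : (a.1:ℂ) * u + (a.2:ℂ) * (v + 2 * ↑Real.pi * I)
      = ((a.1:ℂ) * u + (a.2:ℂ) * v) + (a.2:ℂ) * (2 * ↑Real.pi * I) := by ring
  rw [h1, Complex.exp_add, Complex.exp_int_mul_two_pi_mul_I, mul_one]

lemma E_period_u' (n : ℤ) (u v : ℂ) : E s c (u + (n:ℂ) * (2 * ↑Real.pi * I)) v = E s c u v := by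
  unfold E
  refine Finset.sum_congr rfl fun a _ => ?_
  have h1 : (a.1:ℂ) * (u + (n:ℂ) * (2 * ↑Real.pi * I)) + (a.2:ℂ) * v
      = ((a.1:ℂ) * u + (a.2:ℂ) * v) + ((a.1 * n : ℤ):ℂ) * (2 * ↑Real.pi * I) := by
    push_cast; ring
  rw [h1, Complex.exp_add, Complex.exp_int_mul_two_pi_mul_I, mul_one]

lemma E_period_v' (n : ℤ) (u v : ℂ) : E s c u (v + (n:ℂ) * (2 * ↑Real.pi * I)) = E s c u v := by
  unfold E
  refine Finset.sum_congr rfl fun a _ => ?_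
  have h1 : (a.1:ℂ) * u + (a.2:ℂ) * (v + (n:ℂ) * (2 * ↑Real.pi * I))
      = ((a.1:ℂ) * u + (a.2:ℂ) * v) + ((a.2 * n : ℤ):ℂ) * (2 * ↑Real.pi * I) := by
    push_cast; ring
  rw [h1, Complex.exp_add, Complex.exp_int_mul_two_pi_mul_I, mul_one]

lemma E_comp_continuous {s} {c} {α : Type*} [TopologicalSpace α] {A B : α → ℂ}
    (hA : Continuous A) (hB : Continuous B) : Continuous fun x => E s c (A x) (B x) := by
  unfold E
  apply continuous_finset_sum
  intro a _
  exact continuous_const.mul (((continuous_const.mul hA).add (continuous_const.mul hB)).cexp)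

variable (P : (ℤ × ℤ) →₀ ℂ)

lemma lEval_exp (u v : ℂ) : lEval P (Complex.exp u) (Complex.exp v) = E P.support (⇑P) u v := by
  unfold lEval E Finsupp.sum
  refine Finset.sum_congr rfl fun a _ => ?_
  dsimp only
  rw [← Complex.exp_int_mul u a.1, ← Complex.exp_int_mul v a.2, mul_assoc, ← Complex.exp_add]

lemma mem_amoeba_iff (q : ℝ × ℝ) :
    q ∈ amoeba P ↔ ∃ θ φ : ℝ, E P.support (⇑P) (↑q.1 + ↑θ * I) (↑q.2 + ↑φ * I) = 0 := by
  constructor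
  · rintro ⟨z, w, hz, hw, hzero, haz, haw⟩
    refine ⟨z.arg, w.arg, ?_⟩
    have hz' : z = Complex.exp (↑q.1 + ↑z.arg * I) := by
      rw [Complex.exp_add, ← Complex.ofReal_exp, ← haz]
      exact (Complex.norm_mul_exp_arg_mul_I z).symm
    have hw' : w = Complex.exp (↑q.2 + ↑w.arg * I) := by
      rw [Complex.exp_add, ← Complex.ofReal_exp, ← haw]
      exact (Complex.norm_mul_exp_arg_mul_I w).symm
    rw [← lEval_exp, ← hz', ← hw']
    exact hzero
  · rintro ⟨θ, φ, h⟩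
    refine ⟨Complex.exp (↑q.1 + ↑θ * I), Complex.exp (↑q.2 + ↑φ * I),
      Complex.exp_ne_zero _, Complex.exp_ne_zero _, by rw [lEval_exp]; exact h, ?_, ?_⟩ <;>
      simp [Complex.norm_exp]

lemma not_mem_amoeba_iff (q : ℝ × ℝ) :
    q ∉ amoeba P ↔ ∀ θ φ : ℝ, E P.support (⇑P) (↑q.1 + ↑θ * I) (↑q.2 + ↑φ * I) ≠ 0 := by
  rw [mem_amoeba_iff]; push_neg; rfl

/-- the closed box `[0,2π]²` -/
def Cbox : Set (ℝ × ℝ) := Icc (0:ℝ) (2*Real.pi) ×ˢ Icc (0:ℝ) (2*Real.pi)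

lemma Cbox_compact : IsCompact Cbox := isCompact_Icc.prod isCompact_Icc

/-- reduction of an angle mod 2π -/
lemma angle_reduce (θ : ℝ) : ∃ θ' ∈ Icc (0:ℝ) (2*Real.pi), ∃ n : ℤ,
    (θ:ℂ) * I = (θ':ℂ) * I + (n:ℂ) * (2 * ↑Real.pi * I) := by
  have h2π : (0:ℝ) < 2 * Real.pi := by positivity
  set n := ⌊θ / (2 * Real.pi)⌋
  have h1 : (n:ℝ) ≤ θ / (2 * Real.pi) := Int.floor_le _
  have h2 : θ / (2 * Real.pi) < n + 1 := Int.lt_floor_add_one _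
  have h1' : (n:ℝ) * (2 * Real.pi) ≤ θ := by
    calc (n:ℝ) * (2 * Real.pi) ≤ θ / (2 * Real.pi) * (2 * Real.pi) := by
          apply mul_le_mul_of_nonneg_right h1 h2π.le
      _ = θ := by field_simp
  have h2' : θ < ((n:ℝ) + 1) * (2 * Real.pi) := by
    calc θ = θ / (2 * Real.pi) * (2 * Real.pi) := by field_simp
      _ < ((n:ℝ) + 1) * (2 * Real.pi) := by
          apply mul_lt_mul_of_pos_right h2 h2π
  refine ⟨θ - 2 * Real.pi * n, ⟨by nlinarith, by nlinarith⟩, n, ?_⟩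
  push_cast; ring

set_option maxHeartbeats 1000000 in
lemma isOpen_compl_amoeba : IsOpen (amoeba P)ᶜ := by
  rw [isOpen_iff_mem_nhds]
  intro q hq
  rw [mem_compl_iff, not_mem_amoeba_iff] at hq
  let Φ : (ℝ × ℝ) × (ℝ × ℝ) → ℂ := fun p =>
    E P.support (⇑P) (↑p.1.1 + ↑p.2.1 * I) (↑p.1.2 + ↑p.2.2 * I)
  have hΦc : Continuous Φ := by
    apply E_comp_continuous <;> fun_prop
  have hopen : IsOpen (Φ ⁻¹' {0}ᶜ) := (isOpen_compl_singleton).preimage hΦc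
  have hsub : {q} ×ˢ Cbox ⊆ Φ ⁻¹' {0}ᶜ := by
    rintro ⟨q', t⟩ ⟨hq', ht⟩
    simp only [mem_singleton_iff] at hq'
    subst hq'
    simp only [mem_preimage, mem_compl_iff, mem_singleton_iff]
    exact hq t.1 t.2
  obtain ⟨u, v, huo, hvo, hqu, hCv, huv⟩ :=
    generalized_tube_lemma isCompact_singleton Cbox_compact hopen hsub
  refine Filter.mem_of_superset (huo.mem_nhds (hqu rfl)) ?_
  intro q' hq'
  rw [mem_compl_iff, not_mem_amoeba_iff]
  intro θ φ
  obtain ⟨θ', hθ', nθ, hθeq⟩ := angle_reduce θ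
  obtain ⟨φ', hφ', nφ, hφeq⟩ := angle_reduce φ
  have h1 : (↑q'.1 + ↑θ * I : ℂ) = (↑q'.1 + ↑θ' * I) + (nθ:ℂ) * (2 * ↑Real.pi * I) := by
    rw [hθeq]; ring
  have h2 : (↑q'.2 + ↑φ * I : ℂ) = (↑q'.2 + ↑φ' * I) + (nφ:ℂ) * (2 * ↑Real.pi * I) := by
    rw [hφeq]; ring
  rw [h1, h2, E_period_u', E_period_v']
  have hmem : ((q', (θ', φ')) : (ℝ×ℝ) × (ℝ×ℝ)) ∈ u ×ˢ v := ⟨hq', hCv ⟨hθ', hφ'⟩⟩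
  have h0 := huv hmem
  simp only [mem_preimage, mem_compl_iff, mem_singleton_iff] at h0
  exact h0

/-- derivative of `log |g|` -/
lemma hasDerivAt_log_abs {g : ℝ → ℂ} {g' : ℂ} {x : ℝ} (h : HasDerivAt g g' x)
    (h0 : g x ≠ 0) :
    HasDerivAt (fun t => Real.log ‖g t‖) ((g' / g x).re) x := by
  have hre : HasDerivAt (fun t => (g t).re) g'.re x :=
    (Complex.reCLM.hasFDerivAt.comp_hasDerivAt x h)
  have him : HasDerivAt (fun t => (g t).im) g'.im x :=
    (Complex.imCLM.hasFDerivAt.comp_hasDerivAt x h)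
  have hu : HasDerivAt (fun t => (g t).re ^ 2 + (g t).im ^ 2)
      (2 * (g x).re ^ 1 * g'.re + 2 * (g x).im ^ 1 * g'.im) x := (hre.pow 2).add (him.pow 2)
  have hu0 : (g x).re ^ 2 + (g x).im ^ 2 ≠ 0 := by
    have := Complex.normSq_pos.2 h0
    rw [Complex.normSq_apply] at this
    intro hc; nlinarith
  have hlog := (hu.log hu0).div_const 2
  have heq : (fun t => Real.log ‖g t‖)
      = fun t => Real.log ((g t).re ^ 2 + (g t).im ^ 2) / 2 := by
    funext t
    rw [Complex.norm_def, Real.log_sqrt (Complex.normSq_nonneg _), Complex.normSq_apply]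
    ring_nf
  rw [heq]
  refine hlog.congr_deriv ?_
  have hu0' : (g x).re * (g x).re + (g x).im * (g x).im ≠ 0 := by
    intro hc; apply hu0; nlinarith
  rw [Complex.div_re, Complex.normSq_apply]
  field_simp [hu0']
/-- `∂_u (E c / E c₀)` -/
noncomputable def Q1 (s : Finset (ℤ × ℤ)) (c c₀ : (ℤ × ℤ) → ℂ) (u v : ℂ) : ℂ :=
  (E s (dd1 c) u v * E s c₀ u v - E s c u v * E s (dd1 c₀) u v) / (E s c₀ u v) ^ 2

/-- `∂_v (E c / E c₀)` -/
noncomputable def Q2 (s : Finset (ℤ × ℤ)) (c c₀ : (ℤ × ℤ) → ℂ) (u v : ℂ) : ℂ :=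
  (E s (dd2 c) u v * E s c₀ u v - E s c u v * E s (dd2 c₀) u v) / (E s c₀ u v) ^ 2

variable {s : Finset (ℤ × ℤ)} {c c₀ : (ℤ × ℤ) → ℂ}

lemma quot_hasDerivAt_x {t x : ℝ} {v : ℂ} (h0 : E s c₀ (↑x + ↑t * I) v ≠ 0) :
    HasDerivAt (fun x : ℝ => E s c (↑x + ↑t * I) v / E s c₀ (↑x + ↑t * I) v)
      (Q1 s c c₀ (↑x + ↑t * I) v) x :=
  (E_hasDerivAt_x t x v).div (E_hasDerivAt_x t x v) h0

lemma quot_hasDerivAt_theta {x θ : ℝ} {v : ℂ} (h0 : E s c₀ (↑x + ↑θ * I) v ≠ 0) :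
    HasDerivAt (fun θ : ℝ => E s c (↑x + ↑θ * I) v / E s c₀ (↑x + ↑θ * I) v)
      (Q1 s c c₀ (↑x + ↑θ * I) v * I) θ := by
  have h := (E_hasDerivAt_theta (s := s) (c := c) x θ v).div
    (E_hasDerivAt_theta (s := s) (c := c₀) x θ v) h0
  refine h.congr_deriv ?_
  unfold Q1
  simp only [div_eq_mul_inv]
  ring

lemma quot_hasDerivAt_y {u : ℂ} {t y : ℝ} (h0 : E s c₀ u (↑y + ↑t * I) ≠ 0) :
    HasDerivAt (fun y : ℝ => E s c u (↑y + ↑t * I) / E s c₀ u (↑y + ↑t * I))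
      (Q2 s c c₀ u (↑y + ↑t * I)) y :=
  (E_hasDerivAt_y u t y).div (E_hasDerivAt_y u t y) h0

lemma quot_hasDerivAt_phi {u : ℂ} {y φ : ℝ} (h0 : E s c₀ u (↑y + ↑φ * I) ≠ 0) :
    HasDerivAt (fun φ : ℝ => E s c u (↑y + ↑φ * I) / E s c₀ u (↑y + ↑φ * I))
      (Q2 s c c₀ u (↑y + ↑φ * I) * I) φ := by
  have h := (E_hasDerivAt_phi (s := s) (c := c) u y φ).div
    (E_hasDerivAt_phi (s := s) (c := c₀) u y φ) h0
  refine h.congr_deriv ?_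
  unfold Q2
  simp only [div_eq_mul_inv]
  ring

lemma Q1_continuous_line {x y : ℝ} (h : ∀ θ φ : ℝ, E s c₀ (↑x + ↑θ * I) (↑y + ↑φ * I) ≠ 0) :
    Continuous fun t : ℝ × ℝ => Q1 s c c₀ (↑x + ↑t.1 * I) (↑y + ↑t.2 * I) := by
  unfold Q1
  have hA : Continuous fun t : ℝ × ℝ => ((x:ℂ) + ↑t.1 * I) := by fun_prop
  have hB : Continuous fun t : ℝ × ℝ => ((y:ℂ) + ↑t.2 * I) := by fun_prop
  exact (((E_comp_continuous hA hB).mul (E_comp_continuous hA hB)).sub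
    ((E_comp_continuous hA hB).mul (E_comp_continuous hA hB))).div
    (((E_comp_continuous hA hB)).pow 2) (fun t => pow_ne_zero _ (h t.1 t.2))

lemma Q2_continuous_line {x y : ℝ} (h : ∀ θ φ : ℝ, E s c₀ (↑x + ↑θ * I) (↑y + ↑φ * I) ≠ 0) :
    Continuous fun t : ℝ × ℝ => Q2 s c c₀ (↑x + ↑t.1 * I) (↑y + ↑t.2 * I) := by
  unfold Q2
  have hA : Continuous fun t : ℝ × ℝ => ((x:ℂ) + ↑t.1 * I) := by fun_prop
  have hB : Continuous fun t : ℝ × ℝ => ((y:ℂ) + ↑t.2 * I) := by fun_prop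
  exact (((E_comp_continuous hA hB).mul (E_comp_continuous hA hB)).sub
    ((E_comp_continuous hA hB).mul (E_comp_continuous hA hB))).div
    (((E_comp_continuous hA hB)).pow 2) (fun t => pow_ne_zero _ (h t.1 t.2))

/-- FTC-based vanishing: the `θ`-integral of `Q1` over a full period is `0`. -/
lemma ftc_u {x : ℝ} {v : ℂ} (hnv : ∀ θ : ℝ, E s c₀ (↑x + ↑θ * I) v ≠ 0) :
    ∫ θ in (0:ℝ)..(2*Real.pi), Q1 s c c₀ (↑x + ↑θ * I) v = 0 := by
  have hd : ∀ θ ∈ uIcc (0:ℝ) (2*Real.pi),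
      HasDerivAt (fun θ : ℝ => E s c (↑x + ↑θ * I) v / E s c₀ (↑x + ↑θ * I) v)
        (Q1 s c c₀ (↑x + ↑θ * I) v * I) θ := fun θ _ => quot_hasDerivAt_theta (hnv θ)
  have hc : Continuous fun θ : ℝ => Q1 s c c₀ (↑x + ↑θ * I) v := by
    unfold Q1
    have hA : Continuous fun θ : ℝ => ((x:ℂ) + ↑θ * I) := by fun_prop
    have hB : Continuous fun _ : ℝ => v := continuous_const
    exact (((E_comp_continuous hA hB).mul (E_comp_continuous hA hB)).sub
      ((E_comp_continuous hA hB).mul (E_comp_continuous hA hB))).div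
      ((E_comp_continuous hA hB).pow 2) (fun θ => pow_ne_zero _ (hnv θ))
  have hint : IntervalIntegrable (fun θ : ℝ => Q1 s c c₀ (↑x + ↑θ * I) v * I)
      volume 0 (2*Real.pi) := (hc.mul continuous_const).intervalIntegrable _ _
  have key := integral_eq_sub_of_hasDerivAt hd hint
  have hper : E s c (↑x + ↑(2*Real.pi) * I) v / E s c₀ (↑x + ↑(2*Real.pi) * I) v
      = E s c (↑x + ↑(0:ℝ) * I) v / E s c₀ (↑x + ↑(0:ℝ) * I) v := by
    have e1 : ((x:ℂ) + ↑(2*Real.pi) * I) = ((x:ℂ) + ↑(0:ℝ) * I) + 2 * ↑Real.pi * I := by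
      push_cast; ring
    rw [e1, E_period_u, E_period_u]
  rw [hper, sub_self] at key
  have key2 : (∫ θ in (0:ℝ)..(2*Real.pi), Q1 s c c₀ (↑x + ↑θ * I) v) * I = 0 := by
    rw [← intervalIntegral.integral_mul_const]; exact key
  have := mul_eq_zero.1 key2
  rcases this with h | h
  · exact h
  · exact absurd h I_ne_zero

lemma ftc_v {y : ℝ} {u : ℂ} (hnv : ∀ φ : ℝ, E s c₀ u (↑y + ↑φ * I) ≠ 0) :
    ∫ φ in (0:ℝ)..(2*Real.pi), Q2 s c c₀ u (↑y + ↑φ * I) = 0 := by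
  have hd : ∀ φ ∈ uIcc (0:ℝ) (2*Real.pi),
      HasDerivAt (fun φ : ℝ => E s c u (↑y + ↑φ * I) / E s c₀ u (↑y + ↑φ * I))
        (Q2 s c c₀ u (↑y + ↑φ * I) * I) φ := fun φ _ => quot_hasDerivAt_phi (hnv φ)
  have hc : Continuous fun φ : ℝ => Q2 s c c₀ u (↑y + ↑φ * I) := by
    unfold Q2
    have hA : Continuous fun _ : ℝ => u := continuous_const
    have hB : Continuous fun φ : ℝ => ((y:ℂ) + ↑φ * I) := by fun_prop
    exact (((E_comp_continuous hA hB).mul (E_comp_continuous hA hB)).sub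
      ((E_comp_continuous hA hB).mul (E_comp_continuous hA hB))).div
      ((E_comp_continuous hA hB).pow 2) (fun φ => pow_ne_zero _ (hnv φ))
  have hint : IntervalIntegrable (fun φ : ℝ => Q2 s c c₀ u (↑y + ↑φ * I) * I)
      volume 0 (2*Real.pi) := (hc.mul continuous_const).intervalIntegrable _ _
  have key := integral_eq_sub_of_hasDerivAt hd hint
  have hper : E s c u (↑y + ↑(2*Real.pi) * I) / E s c₀ u (↑y + ↑(2*Real.pi) * I)
      = E s c u (↑y + ↑(0:ℝ) * I) / E s c₀ u (↑y + ↑(0:ℝ) * I) := by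
    have e1 : ((y:ℂ) + ↑(2*Real.pi) * I) = ((y:ℂ) + ↑(0:ℝ) * I) + 2 * ↑Real.pi * I := by
      push_cast; ring
    rw [e1, E_period_v, E_period_v]
  rw [hper, sub_self] at key
  have key2 : (∫ φ in (0:ℝ)..(2*Real.pi), Q2 s c c₀ u (↑y + ↑φ * I)) * I = 0 := by
    rw [← intervalIntegral.integral_mul_const]; exact key
  rcases mul_eq_zero.1 key2 with h | h
  · exact h
  · exact absurd h I_ne_zero

/-- the half-open box `(0,2π]²` -/
def B2 : Set (ℝ × ℝ) := Ioc (0:ℝ) (2*Real.pi) ×ˢ Ioc (0:ℝ) (2*Real.pi)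

lemma measurableSet_B2 : MeasurableSet B2 := measurableSet_Ioc.prod measurableSet_Ioc

lemma B2_subset_Cbox : B2 ⊆ Cbox := prod_mono Ioc_subset_Icc_self Ioc_subset_Icc_self

lemma volume_B2_lt_top : volume B2 < ⊤ :=
  lt_of_le_of_lt (measure_mono B2_subset_Cbox) Cbox_compact.measure_lt_top

lemma two_pi_pos : (0:ℝ) < 2 * Real.pi := by positivity

/-- iterated integral over the box, `θ` outer -/
lemma intB_eq_iterated {Y : Type*} [NormedAddCommGroup Y] [NormedSpace ℝ Y]
    {g : ℝ × ℝ → Y} (hg : IntegrableOn g B2) :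
    ∫ t in B2, g t = ∫ θ in (0:ℝ)..(2*Real.pi), ∫ φ in (0:ℝ)..(2*Real.pi), g (θ, φ) := by
  have h1 : ∀ θ : ℝ, (∫ φ in (0:ℝ)..(2*Real.pi), g (θ, φ))
      = ∫ φ in Ioc (0:ℝ) (2*Real.pi), g (θ, φ) := fun θ =>
    intervalIntegral.integral_of_le two_pi_pos.le
  simp_rw [h1, intervalIntegral.integral_of_le two_pi_pos.le]
  have hg' : Integrable (Function.uncurry fun θ φ => g (θ, φ))
      ((volume.restrict (Ioc (0:ℝ) (2*Real.pi))).prod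
        (volume.restrict (Ioc (0:ℝ) (2*Real.pi)))) := by
    rw [Measure.prod_restrict]
    have : Function.uncurry (fun θ φ => g (θ, φ)) = g := by
      funext z; simp [Function.uncurry]
    rw [this, ← Measure.volume_eq_prod]
    exact hg
  have := MeasureTheory.integral_integral hg'
  rw [this, Measure.prod_restrict, ← Measure.volume_eq_prod]
  unfold B2
  simp

/-- iterated integral over the box, `φ` outer -/
lemma intB_eq_iterated_swap {Y : Type*} [NormedAddCommGroup Y] [NormedSpace ℝ Y]
    {g : ℝ × ℝ → Y} (hg : IntegrableOn g B2) :
    ∫ t in B2, g t = ∫ φ in (0:ℝ)..(2*Real.pi), ∫ θ in (0:ℝ)..(2*Real.pi), g (θ, φ) := by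
  have h1 : ∀ φ : ℝ, (∫ θ in (0:ℝ)..(2*Real.pi), g (θ, φ))
      = ∫ θ in Ioc (0:ℝ) (2*Real.pi), g (θ, φ) := fun φ =>
    intervalIntegral.integral_of_le two_pi_pos.le
  simp_rw [h1, intervalIntegral.integral_of_le two_pi_pos.le]
  have hg' : Integrable (Function.uncurry fun θ φ => g (θ, φ))
      ((volume.restrict (Ioc (0:ℝ) (2*Real.pi))).prod
        (volume.restrict (Ioc (0:ℝ) (2*Real.pi)))) := by
    rw [Measure.prod_restrict]
    have : Function.uncurry (fun θ φ => g (θ, φ)) = g := by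
      funext z; simp [Function.uncurry]
    rw [this, ← Measure.volume_eq_prod]
    exact hg
  have hswap := MeasureTheory.integral_integral_swap hg'
  have := MeasureTheory.integral_integral hg'
  rw [hswap] at this
  rw [this, Measure.prod_restrict, ← Measure.volume_eq_prod]
  unfold B2
  simp

variable {s : Finset (ℤ × ℤ)} {c c₀ : (ℤ × ℤ) → ℂ}

lemma intB_Q1_zero {x y : ℝ} (hnv : ∀ θ φ : ℝ, E s c₀ (↑x + ↑θ * I) (↑y + ↑φ * I) ≠ 0) :
    ∫ t in B2, Q1 s c c₀ (↑x + ↑t.1 * I) (↑y + ↑t.2 * I) = 0 := by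
  have hg : IntegrableOn (fun t : ℝ × ℝ => Q1 s c c₀ (↑x + ↑t.1 * I) (↑y + ↑t.2 * I)) B2 :=
    (((Q1_continuous_line hnv).continuousOn).integrableOn_compact Cbox_compact).mono_set
      B2_subset_Cbox
  rw [intB_eq_iterated_swap hg]
  have h0 : ∀ φ : ℝ, (∫ θ in (0:ℝ)..(2*Real.pi), Q1 s c c₀ (↑x + ↑θ * I) (↑y + ↑φ * I))
      = 0 := fun φ => ftc_u (fun θ => hnv θ φ)
  simp_rw [h0, intervalIntegral.integral_zero]

lemma intB_Q2_zero {x y : ℝ} (hnv : ∀ θ φ : ℝ, E s c₀ (↑x + ↑θ * I) (↑y + ↑φ * I) ≠ 0) :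
    ∫ t in B2, Q2 s c c₀ (↑x + ↑t.1 * I) (↑y + ↑t.2 * I) = 0 := by
  have hg : IntegrableOn (fun t : ℝ × ℝ => Q2 s c c₀ (↑x + ↑t.1 * I) (↑y + ↑t.2 * I)) B2 :=
    (((Q2_continuous_line hnv).continuousOn).integrableOn_compact Cbox_compact).mono_set
      B2_subset_Cbox
  rw [intB_eq_iterated hg]
  have h0 : ∀ θ : ℝ, (∫ φ in (0:ℝ)..(2*Real.pi), Q2 s c c₀ (↑x + ↑θ * I) (↑y + ↑φ * I))
      = 0 := fun θ => ftc_v (fun φ => hnv θ φ)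
  simp_rw [h0, intervalIntegral.integral_zero]

/-- differentiation under the integral sign over the box -/
lemma DUI {Y : Type*} [NormedAddCommGroup Y] [NormedSpace ℝ Y] [CompleteSpace Y]
    {F F' : ℝ → (ℝ × ℝ) → Y} {x₀ ε : ℝ} (hε : 0 < ε)
    (hF : ContinuousOn (fun p : ℝ × (ℝ × ℝ) => F p.1 p.2) (closedBall x₀ ε ×ˢ Cbox))
    (hF' : ContinuousOn (fun p : ℝ × (ℝ × ℝ) => F' p.1 p.2) (closedBall x₀ ε ×ˢ Cbox))
    (hd : ∀ x ∈ ball x₀ ε, ∀ t ∈ Cbox, HasDerivAt (fun x => F x t) (F' x t) x) :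
    HasDerivAt (fun x => ∫ t in B2, F x t) (∫ t in B2, F' x₀ t) x₀ := by
  have hslice : ∀ {G : ℝ → (ℝ × ℝ) → Y},
      ContinuousOn (fun p : ℝ × (ℝ × ℝ) => G p.1 p.2) (closedBall x₀ ε ×ˢ Cbox) →
      ∀ x ∈ closedBall x₀ ε, ContinuousOn (G x) Cbox := by
    intro G hG x hx
    exact hG.comp (Continuous.prodMk_right x).continuousOn (fun t ht => ⟨hx, ht⟩)
  obtain ⟨C, hC⟩ :=
    ((isCompact_closedBall x₀ ε).prod Cbox_compact).exists_bound_of_continuousOn hF'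
  refine (_root_.hasDerivAt_integral_of_dominated_loc_of_deriv_le (F' := F')
    (bound := fun _ => C) (ball_mem_nhds x₀ hε) ?_ ?_ ?_ ?_ ?_ ?_).2
  · filter_upwards [closedBall_mem_nhds x₀ hε] with x hx
    exact ((hslice hF x hx).mono B2_subset_Cbox).aestronglyMeasurable measurableSet_B2
  · exact ((hslice hF x₀ (mem_closedBall_self hε.le)).integrableOn_compact
      Cbox_compact).mono_set B2_subset_Cbox
  · exact ((hslice hF' x₀ (mem_closedBall_self hε.le)).mono
      B2_subset_Cbox).aestronglyMeasurable measurableSet_B2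
  · filter_upwards [ae_restrict_mem measurableSet_B2] with t ht
    intro x hx
    exact hC (x, t) ⟨ball_subset_closedBall hx, B2_subset_Cbox ht⟩
  · exact integrableOn_const volume_B2_lt_top.ne
  · filter_upwards [ae_restrict_mem measurableSet_B2] with t ht
    intro x hx
    exact hd x hx t (B2_subset_Cbox ht)


variable {s : Finset (ℤ × ℤ)} {c c₀ : (ℤ × ℤ) → ℂ}

/-- continuity helpers -/
lemma contOn_quot {α : Type*} [TopologicalSpace α] {A B : α → ℂ} {S : Set α}
    (hA : Continuous A) (hB : Continuous B) (h0 : ∀ p ∈ S, E s c₀ (A p) (B p) ≠ 0) :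
    ContinuousOn (fun p => E s c (A p) (B p) / E s c₀ (A p) (B p)) S :=
  (E_comp_continuous hA hB).continuousOn.div (E_comp_continuous hA hB).continuousOn h0

lemma contOn_Q1 {α : Type*} [TopologicalSpace α] {A B : α → ℂ} {S : Set α}
    (hA : Continuous A) (hB : Continuous B) (h0 : ∀ p ∈ S, E s c₀ (A p) (B p) ≠ 0) :
    ContinuousOn (fun p => Q1 s c c₀ (A p) (B p)) S := by
  unfold Q1
  exact (((E_comp_continuous hA hB).continuousOn.mul
    (E_comp_continuous hA hB).continuousOn).sub
    ((E_comp_continuous hA hB).continuousOn.mul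
      (E_comp_continuous hA hB).continuousOn)).div
    (((E_comp_continuous hA hB).pow 2).continuousOn)
    (fun p hp => pow_ne_zero _ (h0 p hp))

lemma contOn_Q2 {α : Type*} [TopologicalSpace α] {A B : α → ℂ} {S : Set α}
    (hA : Continuous A) (hB : Continuous B) (h0 : ∀ p ∈ S, E s c₀ (A p) (B p) ≠ 0) :
    ContinuousOn (fun p => Q2 s c c₀ (A p) (B p)) S := by
  unfold Q2
  exact (((E_comp_continuous hA hB).continuousOn.mul
    (E_comp_continuous hA hB).continuousOn).sub
    ((E_comp_continuous hA hB).continuousOn.mul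
      (E_comp_continuous hA hB).continuousOn)).div
    (((E_comp_continuous hA hB).pow 2).continuousOn)
    (fun p hp => pow_ne_zero _ (h0 p hp))

lemma contOn_logabsE {α : Type*} [TopologicalSpace α] {A B : α → ℂ} {S : Set α}
    (hA : Continuous A) (hB : Continuous B) (h0 : ∀ p ∈ S, E s c₀ (A p) (B p) ≠ 0) :
    ContinuousOn (fun p => Real.log ‖E s c₀ (A p) (B p)‖) S := by
  have hg : Continuous fun p => ‖E s c₀ (A p) (B p)‖ :=
    (E_comp_continuous hA hB).norm
  exact hg.continuousOn.log (fun x hx => norm_ne_zero_iff.mpr (h0 x hx))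

lemma contOn_requot {α : Type*} [TopologicalSpace α] {A B : α → ℂ} {S : Set α}
    (hA : Continuous A) (hB : Continuous B) (h0 : ∀ p ∈ S, E s c₀ (A p) (B p) ≠ 0) :
    ContinuousOn (fun p => (E s c (A p) (B p) / E s c₀ (A p) (B p)).re) S :=
  Complex.continuous_re.comp_continuousOn (contOn_quot hA hB h0)

attribute [irreducible] E Q1 Q2

/-- the three horizontal derivative claims -/
lemma derivs_x {q : ℝ × ℝ} {ε : ℝ} (hε : 0 < ε)
    (hH : ∀ x' ∈ closedBall q.1 ε, ∀ θ φ : ℝ,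
      E s c₀ (↑x' + ↑θ * I) (↑q.2 + ↑φ * I) ≠ 0) :
    HasDerivAt (fun x' : ℝ => ∫ t in B2,
        Real.log ‖E s c₀ (↑x' + ↑t.1 * I) (↑q.2 + ↑t.2 * I)‖)
      ((∫ t in B2, E s (dd1 c₀) (↑q.1 + ↑t.1 * I) (↑q.2 + ↑t.2 * I) /
          E s c₀ (↑q.1 + ↑t.1 * I) (↑q.2 + ↑t.2 * I)).re) q.1
    ∧ HasDerivAt (fun x' : ℝ => ∫ t in B2, E s (dd1 c₀) (↑x' + ↑t.1 * I) (↑q.2 + ↑t.2 * I) /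
          E s c₀ (↑x' + ↑t.1 * I) (↑q.2 + ↑t.2 * I)) 0 q.1
    ∧ HasDerivAt (fun x' : ℝ => ∫ t in B2, E s (dd2 c₀) (↑x' + ↑t.1 * I) (↑q.2 + ↑t.2 * I) /
          E s c₀ (↑x' + ↑t.1 * I) (↑q.2 + ↑t.2 * I)) 0 q.1 := by
  have hA : Continuous fun p : ℝ × (ℝ × ℝ) => ((p.1 : ℂ) + ↑p.2.1 * I) := by fun_prop
  have hB : Continuous fun p : ℝ × (ℝ × ℝ) => ((q.2 : ℂ) + ↑p.2.2 * I) := by fun_prop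
  have h0 : ∀ p ∈ closedBall q.1 ε ×ˢ Cbox,
      E s c₀ ((p.1 : ℂ) + ↑p.2.1 * I) ((q.2 : ℂ) + ↑p.2.2 * I) ≠ 0 :=
    fun p hp => hH p.1 hp.1 p.2.1 p.2.2
  have hball : ∀ x' ∈ ball q.1 ε, x' ∈ closedBall q.1 ε := fun x' h => ball_subset_closedBall h
  have hnv0 : ∀ θ φ : ℝ, E s c₀ (↑q.1 + ↑θ * I) (↑q.2 + ↑φ * I) ≠ 0 :=
    fun θ φ => hH q.1 (mem_closedBall_self hε.le) θ φ
  -- integrability of the complex quotient at the center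
  have hquotint : Integrable (fun t : ℝ × ℝ =>
      E s (dd1 c₀) (↑q.1 + ↑t.1 * I) (↑q.2 + ↑t.2 * I) /
        E s c₀ (↑q.1 + ↑t.1 * I) (↑q.2 + ↑t.2 * I)) (volume.restrict B2) := by
    have hc : ContinuousOn (fun t : ℝ × ℝ =>
        E s (dd1 c₀) (↑q.1 + ↑t.1 * I) (↑q.2 + ↑t.2 * I) /
          E s c₀ (↑q.1 + ↑t.1 * I) (↑q.2 + ↑t.2 * I)) Cbox :=
      contOn_quot (by fun_prop) (by fun_prop) (fun t _ => hnv0 t.1 t.2)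
    exact (hc.integrableOn_compact Cbox_compact).mono_set B2_subset_Cbox
  refine ⟨?_, ?_, ?_⟩
  · have h := DUI (F := fun x' t => Real.log ‖
        (E s c₀ (↑x' + ↑t.1 * I) (↑q.2 + ↑t.2 * I))‖)
      (F' := fun x' t => ((E s (dd1 c₀) (↑x' + ↑t.1 * I) (↑q.2 + ↑t.2 * I) /
        E s c₀ (↑x' + ↑t.1 * I) (↑q.2 + ↑t.2 * I)).re)) hε
      (contOn_logabsE hA hB h0) (contOn_requot hA hB h0) ?_
    · have hre := ContinuousLinearMap.integral_comp_comm Complex.reCLM hquotint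
      simp only [Complex.reCLM_apply] at hre
      rw [hre] at h
      exact h
    · intro x hx t _
      exact hasDerivAt_log_abs (E_hasDerivAt_x t.1 x (↑q.2 + ↑t.2 * I))
        (hH x (hball x hx) t.1 t.2)
  · have h := DUI (F := fun x' t => E s (dd1 c₀) (↑x' + ↑t.1 * I) (↑q.2 + ↑t.2 * I) /
        E s c₀ (↑x' + ↑t.1 * I) (↑q.2 + ↑t.2 * I))
      (F' := fun x' t => Q1 s (dd1 c₀) c₀ (↑x' + ↑t.1 * I) (↑q.2 + ↑t.2 * I)) hε
      (contOn_quot hA hB h0) (contOn_Q1 hA hB h0) ?_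
    · rw [intB_Q1_zero hnv0] at h
      exact h
    · intro x hx t _
      exact quot_hasDerivAt_x (hH x (hball x hx) t.1 t.2)
  · have h := DUI (F := fun x' t => E s (dd2 c₀) (↑x' + ↑t.1 * I) (↑q.2 + ↑t.2 * I) /
        E s c₀ (↑x' + ↑t.1 * I) (↑q.2 + ↑t.2 * I))
      (F' := fun x' t => Q1 s (dd2 c₀) c₀ (↑x' + ↑t.1 * I) (↑q.2 + ↑t.2 * I)) hε
      (contOn_quot hA hB h0) (contOn_Q1 hA hB h0) ?_
    · rw [intB_Q1_zero hnv0] at h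
      exact h
    · intro x hx t _
      exact quot_hasDerivAt_x (hH x (hball x hx) t.1 t.2)

/-- the three vertical derivative claims -/
lemma derivs_y {q : ℝ × ℝ} {ε : ℝ} (hε : 0 < ε)
    (hV : ∀ y' ∈ closedBall q.2 ε, ∀ θ φ : ℝ,
      E s c₀ (↑q.1 + ↑θ * I) (↑y' + ↑φ * I) ≠ 0) :
    HasDerivAt (fun y' : ℝ => ∫ t in B2,
        Real.log ‖E s c₀ (↑q.1 + ↑t.1 * I) (↑y' + ↑t.2 * I)‖)
      ((∫ t in B2, E s (dd2 c₀) (↑q.1 + ↑t.1 * I) (↑q.2 + ↑t.2 * I) /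
          E s c₀ (↑q.1 + ↑t.1 * I) (↑q.2 + ↑t.2 * I)).re) q.2
    ∧ HasDerivAt (fun y' : ℝ => ∫ t in B2, E s (dd1 c₀) (↑q.1 + ↑t.1 * I) (↑y' + ↑t.2 * I) /
          E s c₀ (↑q.1 + ↑t.1 * I) (↑y' + ↑t.2 * I)) 0 q.2
    ∧ HasDerivAt (fun y' : ℝ => ∫ t in B2, E s (dd2 c₀) (↑q.1 + ↑t.1 * I) (↑y' + ↑t.2 * I) /
          E s c₀ (↑q.1 + ↑t.1 * I) (↑y' + ↑t.2 * I)) 0 q.2 := by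
  have hA : Continuous fun p : ℝ × (ℝ × ℝ) => ((q.1 : ℂ) + ↑p.2.1 * I) := by fun_prop
  have hB : Continuous fun p : ℝ × (ℝ × ℝ) => ((p.1 : ℂ) + ↑p.2.2 * I) := by fun_prop
  have h0 : ∀ p ∈ closedBall q.2 ε ×ˢ Cbox,
      E s c₀ ((q.1 : ℂ) + ↑p.2.1 * I) ((p.1 : ℂ) + ↑p.2.2 * I) ≠ 0 :=
    fun p hp => hV p.1 hp.1 p.2.1 p.2.2
  have hball : ∀ y' ∈ ball q.2 ε, y' ∈ closedBall q.2 ε := fun y' h => ball_subset_closedBall h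
  have hnv0 : ∀ θ φ : ℝ, E s c₀ (↑q.1 + ↑θ * I) (↑q.2 + ↑φ * I) ≠ 0 :=
    fun θ φ => hV q.2 (mem_closedBall_self hε.le) θ φ
  have hquotint : Integrable (fun t : ℝ × ℝ =>
      E s (dd2 c₀) (↑q.1 + ↑t.1 * I) (↑q.2 + ↑t.2 * I) /
        E s c₀ (↑q.1 + ↑t.1 * I) (↑q.2 + ↑t.2 * I)) (volume.restrict B2) := by
    have hc : ContinuousOn (fun t : ℝ × ℝ =>
        E s (dd2 c₀) (↑q.1 + ↑t.1 * I) (↑q.2 + ↑t.2 * I) /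
          E s c₀ (↑q.1 + ↑t.1 * I) (↑q.2 + ↑t.2 * I)) Cbox :=
      contOn_quot (by fun_prop) (by fun_prop) (fun t _ => hnv0 t.1 t.2)
    exact (hc.integrableOn_compact Cbox_compact).mono_set B2_subset_Cbox
  refine ⟨?_, ?_, ?_⟩
  · have h := DUI (F := fun y' t => Real.log ‖
        (E s c₀ (↑q.1 + ↑t.1 * I) (↑y' + ↑t.2 * I))‖)
      (F' := fun y' t => ((E s (dd2 c₀) (↑q.1 + ↑t.1 * I) (↑y' + ↑t.2 * I) /
        E s c₀ (↑q.1 + ↑t.1 * I) (↑y' + ↑t.2 * I)).re)) hε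
      (contOn_logabsE hA hB h0) (contOn_requot hA hB h0) ?_
    · have hre := ContinuousLinearMap.integral_comp_comm Complex.reCLM hquotint
      simp only [Complex.reCLM_apply] at hre
      rw [hre] at h
      exact h
    · intro y hy t _
      exact hasDerivAt_log_abs (E_hasDerivAt_y (↑q.1 + ↑t.1 * I) t.2 y)
        (hV y (hball y hy) t.1 t.2)
  · have h := DUI (F := fun y' t => E s (dd1 c₀) (↑q.1 + ↑t.1 * I) (↑y' + ↑t.2 * I) /
        E s c₀ (↑q.1 + ↑t.1 * I) (↑y' + ↑t.2 * I))
      (F' := fun y' t => Q2 s (dd1 c₀) c₀ (↑q.1 + ↑t.1 * I) (↑y' + ↑t.2 * I)) hε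
      (contOn_quot hA hB h0) (contOn_Q2 hA hB h0) ?_
    · rw [intB_Q2_zero hnv0] at h
      exact h
    · intro y hy t _
      exact quot_hasDerivAt_y (hV y (hball y hy) t.1 t.2)
  · have h := DUI (F := fun y' t => E s (dd2 c₀) (↑q.1 + ↑t.1 * I) (↑y' + ↑t.2 * I) /
        E s c₀ (↑q.1 + ↑t.1 * I) (↑y' + ↑t.2 * I))
      (F' := fun y' t => Q2 s (dd2 c₀) c₀ (↑q.1 + ↑t.1 * I) (↑y' + ↑t.2 * I)) hε
      (contOn_quot hA hB h0) (contOn_Q2 hA hB h0) ?_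
    · rw [intB_Q2_zero hnv0] at h
      exact h
    · intro y hy t _
      exact quot_hasDerivAt_y (hV y (hball y hy) t.1 t.2)

lemma dist_le_of_mem_uIcc {x a b : ℝ} (hx : x ∈ uIcc a b) : dist x a ≤ dist b a := by
  rw [Real.dist_eq, Real.dist_eq]
  rcases le_total a b with h | h
  · rw [uIcc_of_le h] at hx
    rw [_root_.abs_of_nonneg (by linarith [hx.1]), _root_.abs_of_nonneg (by linarith)]
    linarith [hx.2]
  · rw [uIcc_of_ge h] at hx
    rw [_root_.abs_of_nonpos (by linarith [hx.2]), _root_.abs_of_nonpos (by linarith)]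
    linarith [hx.1]

lemma const1d {Y : Type*} [NormedAddCommGroup Y] [NormedSpace ℝ Y] {φ : ℝ → Y} {a b : ℝ}
    (h : ∀ x ∈ uIcc a b, HasDerivAt φ 0 x) : φ b = φ a := by
  rcases le_total a b with hab | hab
  · rw [uIcc_of_le hab] at h
    exact constant_of_has_deriv_right_zero
      (fun x hx => (h x hx).continuousAt.continuousWithinAt)
      (fun x hx => (h x (mem_Icc_of_Ico hx)).hasDerivWithinAt) b (right_mem_Icc.2 hab)
  · rw [uIcc_of_ge hab] at h
    exact (constant_of_has_deriv_right_zero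
      (fun x hx => (h x hx).continuousAt.continuousWithinAt)
      (fun x hx => (h x (mem_Icc_of_Ico hx)).hasDerivWithinAt) a (right_mem_Icc.2 hab)).symm

lemma ball_const {Y : Type*} [NormedAddCommGroup Y] [NormedSpace ℝ Y]
    {F : ℝ × ℝ → Y} {q : ℝ × ℝ} {δ : ℝ}
    (h : ∀ r ∈ ball q δ, HasDerivAt (fun x => F (x, r.2)) 0 r.1 ∧
      HasDerivAt (fun y => F (r.1, y)) 0 r.2) :
    ∀ r ∈ ball q δ, F r = F q := by
  intro r hr
  have hdist : dist r q < δ := mem_ball.1 hr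
  rw [Prod.dist_eq] at hdist
  have hd1 : dist r.1 q.1 < δ := lt_of_le_of_lt le_sup_left hdist
  have hd2 : dist r.2 q.2 < δ := lt_of_le_of_lt le_sup_right hdist
  have hmem1 : ∀ x ∈ uIcc q.1 r.1, ((x, q.2) : ℝ × ℝ) ∈ ball q δ := by
    intro x hx
    rw [mem_ball, Prod.dist_eq]
    exact sup_lt_iff.2 ⟨lt_of_le_of_lt (dist_le_of_mem_uIcc hx) hd1, by simp [dist_self]; linarith [dist_nonneg (x := r.1) (y := q.1)]⟩
  have hmem2 : ∀ y ∈ uIcc q.2 r.2, ((r.1, y) : ℝ × ℝ) ∈ ball q δ := by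
    intro y hy
    rw [mem_ball, Prod.dist_eq]
    exact sup_lt_iff.2 ⟨hd1, lt_of_le_of_lt (dist_le_of_mem_uIcc hy) hd2⟩
  have step1 : F (r.1, q.2) = F (q.1, q.2) := by
    apply const1d (φ := fun x => F (x, q.2))
    intro x hx
    exact (h (x, q.2) (hmem1 x hx)).1
  have step2 : F (r.1, r.2) = F (r.1, q.2) := by
    apply const1d (φ := fun y => F (r.1, y))
    intro y hy
    exact (h (r.1, y) (hmem2 y hy)).2
  calc F r = F (r.1, r.2) := by rw [Prod.mk.eta]
    _ = F (r.1, q.2) := step2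
    _ = F (q.1, q.2) := step1
    _ = F q := by rw [Prod.mk.eta]

lemma const_on_component {Y : Type*} {F : ℝ × ℝ → Y} {Ω : Set (ℝ × ℝ)} {p : ℝ × ℝ}
    (hp : p ∈ Ω)
    (hloc : ∀ q ∈ connectedComponentIn Ω p, ∃ δ > 0, ∀ r ∈ ball q δ, F r = F q) :
    ∀ q ∈ connectedComponentIn Ω p, F q = F p := by
  classical
  set K := connectedComponentIn Ω p with hK
  have hKconn : IsPreconnected K := isPreconnected_connectedComponentIn
  have hpK : p ∈ K := mem_connectedComponentIn hp
  choose! δ hδ0 hδ using hloc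
  by_contra hcon
  push_neg at hcon
  obtain ⟨q0, hq0K, hq0⟩ := hcon
  set U : Set (ℝ × ℝ) := ⋃ (q : ℝ × ℝ) (_ : q ∈ K ∧ F q = F p), ball q (δ q) with hU
  set V : Set (ℝ × ℝ) := ⋃ (q : ℝ × ℝ) (_ : q ∈ K ∧ F q ≠ F p), ball q (δ q) with hV
  have hUopen : IsOpen U := isOpen_iUnion fun q => isOpen_iUnion fun _ => isOpen_ball
  have hVopen : IsOpen V := isOpen_iUnion fun q => isOpen_iUnion fun _ => isOpen_ball
  have hcover : K ⊆ U ∪ V := by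
    intro q hq
    by_cases hFq : F q = F p
    · exact Or.inl (mem_iUnion₂.2 ⟨q, ⟨hq, hFq⟩, mem_ball_self (hδ0 q hq)⟩)
    · exact Or.inr (mem_iUnion₂.2 ⟨q, ⟨hq, hFq⟩, mem_ball_self (hδ0 q hq)⟩)
  have hUnon : (K ∩ U).Nonempty :=
    ⟨p, hpK, mem_iUnion₂.2 ⟨p, ⟨hpK, rfl⟩, mem_ball_self (hδ0 p hpK)⟩⟩
  have hVnon : (K ∩ V).Nonempty :=
    ⟨q0, hq0K, mem_iUnion₂.2 ⟨q0, ⟨hq0K, hq0⟩, mem_ball_self (hδ0 q0 hq0K)⟩⟩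
  obtain ⟨r, _, hrU, hrV⟩ := hKconn U V hUopen hVopen hcover hUnon hVnon
  obtain ⟨q1, ⟨hq1K, hq1⟩, hr1⟩ := mem_iUnion₂.1 hrU
  obtain ⟨q2, ⟨hq2K, hq2⟩, hr2⟩ := mem_iUnion₂.1 hrV
  have e1 : F r = F q1 := hδ q1 hq1K r hr1
  have e2 : F r = F q2 := hδ q2 hq2K r hr2
  exact hq2 (by rw [← e2, e1, hq1])

/-- a ball inside `Ω` around a point of the component lies in the component -/
lemma ball_subset_component {Ω : Set (ℝ × ℝ)} {p q : ℝ × ℝ} {δ : ℝ} (hδ : 0 < δ)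
    (hq : q ∈ connectedComponentIn Ω p) (hball : ball q δ ⊆ Ω) :
    ball q δ ⊆ connectedComponentIn Ω p := by
  have h1 : ball q δ ⊆ connectedComponentIn Ω q :=
    (convex_ball q δ).isPreconnected.subset_connectedComponentIn (mem_ball_self hδ) hball
  rwa [connectedComponentIn_eq hq]


lemma ronkin_eq (P : (ℤ × ℤ) →₀ ℂ) (q : ℝ × ℝ) (hq : q ∉ amoeba P) :
    ronkin P q = (2 * Real.pi)⁻¹ ^ 2 * ∫ t in B2, Real.log ‖
      (E P.support (⇑P) (↑q.1 + ↑t.1 * I) (↑q.2 + ↑t.2 * I))‖ := by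
  have hnv := (not_mem_amoeba_iff P q).1 hq
  have hg : IntegrableOn (fun t : ℝ × ℝ => Real.log ‖
      (E P.support (⇑P) (↑q.1 + ↑t.1 * I) (↑q.2 + ↑t.2 * I))‖) B2 :=
    ((contOn_logabsE (by fun_prop) (by fun_prop)
      (fun t _ => hnv t.1 t.2)).integrableOn_compact Cbox_compact).mono_set B2_subset_Cbox
  unfold ronkin
  rw [intB_eq_iterated hg]
  congr 1
  refine intervalIntegral.integral_congr fun θ _ => ?_
  refine intervalIntegral.integral_congr fun φ _ => ?_
  rw [lEval_exp]

end RonkinProof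

open RonkinProof in
/-- The Ronkin function of a nonzero Laurent polynomial `P` is affine (linear plus
constant) on each connected component of the complement of the amoeba of `P`. -/
theorem ronkin_affine_off_amoeba (P : (ℤ × ℤ) →₀ ℂ) (hP : P ≠ 0)
    (p : ℝ × ℝ) (hp : p ∈ (amoeba P)ᶜ) :
    ∃ a b c : ℝ, ∀ q ∈ connectedComponentIn (amoeba P)ᶜ p,
      ronkin P q = a * q.1 + b * q.2 + c := by
  classical
  set s : Finset (ℤ × ℤ) := P.support with hsdef
  set Ω : Set (ℝ × ℝ) := (amoeba P)ᶜ with hΩdef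
  have hΩo : IsOpen Ω := isOpen_compl_amoeba P
  have hchar : ∀ q ∈ Ω, ∀ θ φ : ℝ, E s (⇑P) (↑q.1 + ↑θ * I) (↑q.2 + ↑φ * I) ≠ 0 :=
    fun q hq => (not_mem_amoeba_iff P q).1 hq
  set G : ℝ × ℝ → ℝ := fun q => ∫ t in B2, Real.log ‖
    (E s (⇑P) (↑q.1 + ↑t.1 * I) (↑q.2 + ↑t.2 * I))‖ with hGdef
  set W1 : ℝ × ℝ → ℂ := fun q => ∫ t in B2,
    E s (dd1 ⇑P) (↑q.1 + ↑t.1 * I) (↑q.2 + ↑t.2 * I) /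
      E s (⇑P) (↑q.1 + ↑t.1 * I) (↑q.2 + ↑t.2 * I) with hW1def
  set W2 : ℝ × ℝ → ℂ := fun q => ∫ t in B2,
    E s (dd2 ⇑P) (↑q.1 + ↑t.1 * I) (↑q.2 + ↑t.2 * I) /
      E s (⇑P) (↑q.1 + ↑t.1 * I) (↑q.2 + ↑t.2 * I) with hW2def
  have hder : ∀ q ∈ Ω,
      HasDerivAt (fun x' => G (x', q.2)) ((W1 q).re) q.1 ∧
      HasDerivAt (fun y' => G (q.1, y')) ((W2 q).re) q.2 ∧
      HasDerivAt (fun x' => W1 (x', q.2)) 0 q.1 ∧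
      HasDerivAt (fun y' => W1 (q.1, y')) 0 q.2 ∧
      HasDerivAt (fun x' => W2 (x', q.2)) 0 q.1 ∧
      HasDerivAt (fun y' => W2 (q.1, y')) 0 q.2 := by
    intro q hq
    obtain ⟨ε, hε0, hsub⟩ := Metric.nhds_basis_closedBall.mem_iff.1 (hΩo.mem_nhds hq)
    have hH : ∀ x' ∈ closedBall q.1 ε, ∀ θ φ : ℝ,
        E s (⇑P) (↑x' + ↑θ * I) (↑q.2 + ↑φ * I) ≠ 0 := by
      intro x' hx' θ φ
      have hmem : ((x', q.2) : ℝ × ℝ) ∈ closedBall q ε := by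
        rw [mem_closedBall, Prod.dist_eq]
        exact sup_le (mem_closedBall.1 hx') (by simp [dist_self]; exact hε0.le)
      exact hchar _ (hsub hmem) θ φ
    have hV : ∀ y' ∈ closedBall q.2 ε, ∀ θ φ : ℝ,
        E s (⇑P) (↑q.1 + ↑θ * I) (↑y' + ↑φ * I) ≠ 0 := by
      intro y' hy' θ φ
      have hmem : ((q.1, y') : ℝ × ℝ) ∈ closedBall q ε := by
        rw [mem_closedBall, Prod.dist_eq]
        exact sup_le (by simp [dist_self]; exact hε0.le) (mem_closedBall.1 hy')
      exact hchar _ (hsub hmem) θ φ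
    obtain ⟨hgx, hw1x, hw2x⟩ := derivs_x hε0 hH
    obtain ⟨hgy, hw1y, hw2y⟩ := derivs_y hε0 hV
    exact ⟨hgx, hgy, hw1x, hw1y, hw2x, hw2y⟩
  have hKsub : connectedComponentIn Ω p ⊆ Ω := connectedComponentIn_subset _ _
  have hW1loc : ∀ q ∈ connectedComponentIn Ω p, ∃ δ > 0, ∀ r ∈ ball q δ, W1 r = W1 q := by
    intro q hqK
    obtain ⟨δ, hδ0, hδsub⟩ := Metric.isOpen_iff.1 hΩo q (hKsub hqK)
    exact ⟨δ, hδ0, ball_const (fun r hr =>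
      ⟨(hder r (hδsub hr)).2.2.1, (hder r (hδsub hr)).2.2.2.1⟩)⟩
  have hW2loc : ∀ q ∈ connectedComponentIn Ω p, ∃ δ > 0, ∀ r ∈ ball q δ, W2 r = W2 q := by
    intro q hqK
    obtain ⟨δ, hδ0, hδsub⟩ := Metric.isOpen_iff.1 hΩo q (hKsub hqK)
    exact ⟨δ, hδ0, ball_const (fun r hr =>
      ⟨(hder r (hδsub hr)).2.2.2.2.1, (hder r (hδsub hr)).2.2.2.2.2⟩)⟩
  have hW1const := const_on_component hp hW1loc
  have hW2const := const_on_component hp hW2loc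
  set a : ℝ := (W1 p).re with hadef
  set b : ℝ := (W2 p).re with hbdef
  set H : ℝ × ℝ → ℝ := fun q => G q - (a * q.1 + b * q.2) with hHdef
  have hHloc : ∀ q ∈ connectedComponentIn Ω p, ∃ δ > 0, ∀ r ∈ ball q δ, H r = H q := by
    intro q hqK
    obtain ⟨δ, hδ0, hδsub⟩ := Metric.isOpen_iff.1 hΩo q (hKsub hqK)
    have hballK : ball q δ ⊆ connectedComponentIn Ω p :=
      ball_subset_component hδ0 hqK hδsub
    refine ⟨δ, hδ0, ball_const (fun r hr => ⟨?_, ?_⟩)⟩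
    · have hlin : HasDerivAt (fun x : ℝ => a * x + b * r.2) a r.1 := by
        simpa using ((hasDerivAt_id r.1).const_mul a).add_const (b * r.2)
      have h1 : HasDerivAt (fun x => G (x, r.2) - (a * x + b * r.2)) ((W1 r).re - a) r.1 :=
        ((hder r (hδsub hr)).1).sub hlin
      have h0 : (W1 r).re - a = 0 := by
        rw [hW1const r (hballK hr)]; simp [hadef]
      rwa [h0] at h1
    · have hlin : HasDerivAt (fun y : ℝ => a * r.1 + b * y) b r.2 := by
        simpa using (((hasDerivAt_id r.2).const_mul b).const_add (a * r.1))
      have h1 : HasDerivAt (fun y => G (r.1, y) - (a * r.1 + b * y)) ((W2 r).re - b) r.2 :=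
        ((hder r (hδsub hr)).2.1).sub hlin
      have h0 : (W2 r).re - b = 0 := by
        rw [hW2const r (hballK hr)]; simp [hbdef]
      rwa [h0] at h1
  have hHconst := const_on_component hp hHloc
  refine ⟨(2 * Real.pi)⁻¹ ^ 2 * a, (2 * Real.pi)⁻¹ ^ 2 * b, (2 * Real.pi)⁻¹ ^ 2 * H p, ?_⟩
  intro q hqK
  have hq : q ∉ amoeba P := hKsub hqK
  rw [ronkin_eq P q hq]
  have hHq : G q - (a * q.1 + b * q.2) = H p := hHconst q hqK
  have hGq : G q = a * q.1 + b * q.2 + H p := by linarith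
  show (2 * Real.pi)⁻¹ ^ 2 * G q = _
  rw [hGq]
  ring
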